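/- arXiv:1411.6867 — 3 statements merged into one kernel-verified Lean document; each statement's English description precedes it below -/
import Mathlib

section
/- Let K ⊆ ℝⁿ be compact, μ a finite Borel measure with support K, and f continuous on ℝⁿ. Then f is nonnegative on K if and only if ∫_K g² f dμ ≥ 0 for every polynomial g. -/
open MeasureTheory

theorem nonneg_iff_sos_integrals_nonneg (n : ℕ)
    (K : Set (EuclideanSpace ℝ (Fin n))) (hK : IsCompact K)
    (μ : Measure (EuclideanSpace ℝ (Fin n))) [IsFiniteMeasure μ]
    (hsupp : ∀ x, x ∈ K ↔ ∀ U : Set (EuclideanSpace ℝ (Fin n)),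
      IsOpen U → x ∈ U → 0 < μ U)
    (f : EuclideanSpace ℝ (Fin n) → ℝ) (hf : Continuous f) :
    (∀ x ∈ K, 0 ≤ f x) ↔
      ∀ g : MvPolynomial (Fin n) ℝ,
        0 ≤ ∫ x in K, (MvPolynomial.eval (fun i => x i) g) ^ 2 * f x ∂μ := by

  have hKm : MeasurableSet K := hK.isClosed.measurableSet
  constructor
  · intro hpos g
    apply setIntegral_nonneg hKm
    intro x hx
    exact mul_nonneg (sq_nonneg _) (hpos x hx)
  · intro hint
    by_contra hneg
    push_neg at hneg
    obtain ⟨x₀, hx₀K, hx₀⟩ := hneg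
    set c := f x₀ with hc
    -- μ vanishes outside K
    have hKc : μ Kᶜ = 0 := by
      apply measure_null_of_locally_null
      intro x hx
      have hx' : x ∉ K := hx
      rw [hsupp x] at hx'
      push_neg at hx'
      obtain ⟨U, hUo, hxU, hU0⟩ := hx'
      exact ⟨U, mem_nhdsWithin_of_mem_nhds (hUo.mem_nhds hxU), le_antisymm hU0 zero_le⟩
    -- an open ball around x₀ where f < c/2
    have hUopen : IsOpen (f ⁻¹' Set.Iio (c / 2)) := isOpen_Iio.preimage hf
    have hx₀U : x₀ ∈ f ⁻¹' Set.Iio (c / 2) := by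
      simp only [Set.mem_preimage, Set.mem_Iio]
      linarith
    obtain ⟨r, hr, hball⟩ := Metric.isOpen_iff.1 hUopen x₀ hx₀U
    -- the bump function
    set h : EuclideanSpace ℝ (Fin n) → ℝ := fun x => max 0 (1 - dist x x₀ / r) with hh
    have hhc : Continuous h := by
      apply continuous_const.max
      exact continuous_const.sub ((continuous_id.dist continuous_const).div_const r)
    have hh0 : ∀ x, 0 ≤ h x := fun x => le_max_left _ _
    have hh1 : ∀ x, h x ≤ 1 := by
      intro x
      apply max_le (by norm_num)
      have : 0 ≤ dist x x₀ / r := div_nonneg dist_nonneg hr.le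
      linarith
    have hhout : ∀ x, x ∉ Metric.ball x₀ r → h x = 0 := by
      intro x hx
      simp only [Metric.mem_ball, not_lt] at hx
      have : 1 - dist x x₀ / r ≤ 0 := by
        rw [sub_nonpos]
        exact (one_le_div hr).2 hx
      simp [hh, max_eq_left this]
    have hhin : ∀ x, x ∈ Metric.ball x₀ (r / 2) → (1:ℝ)/2 ≤ h x := by
      intro x hx
      simp only [Metric.mem_ball] at hx
      have : 1 - dist x x₀ / r ≥ 1/2 := by
        rw [ge_iff_le, le_sub_comm]
        rw [div_le_iff₀ hr]
        linarith
      exact le_trans this (le_max_right _ _)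
    -- pointwise bound h² f ≤ (c/2) h²
    have hpt : ∀ x, h x ^ 2 * f x ≤ c / 2 * h x ^ 2 := by
      intro x
      by_cases hx : x ∈ Metric.ball x₀ r
      · have hfx : f x < c / 2 := hball hx
        nlinarith [sq_nonneg (h x)]
      · rw [hhout x hx]; norm_num
    -- integrability lemmas
    have hint_aux : ∀ φ : EuclideanSpace ℝ (Fin n) → ℝ, Continuous φ → IntegrableOn φ K μ := by
      intro φ hφ
      exact hφ.continuousOn.integrableOn_compact hK
    have hIh2f : IntegrableOn (fun x => h x ^ 2 * f x) K μ :=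
      hint_aux _ (((hhc.pow 2).mul hf))
    have hIh2 : IntegrableOn (fun x => h x ^ 2) K μ := hint_aux _ (hhc.pow 2)
    set a := ∫ x in K, h x ^ 2 ∂μ with ha
    have hIle : ∫ x in K, h x ^ 2 * f x ∂μ ≤ c / 2 * a := by
      rw [ha, ← integral_const_mul]
      exact setIntegral_mono_on hIh2f (hIh2.const_mul _) hKm fun x _ => hpt x
    -- a > 0
    have hmb : 0 < μ (K ∩ Metric.ball x₀ (r / 2)) := by
      have : μ (Metric.ball x₀ (r/2) ∩ K) = μ (Metric.ball x₀ (r/2)) :=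
        measure_inter_conull hKc
      rw [Set.inter_comm, this]
      exact (hsupp x₀).1 hx₀K _ Metric.isOpen_ball (Metric.mem_ball_self (by linarith))
    have hapos : 0 < a := by
      have h1 : ∫ x in K ∩ Metric.ball x₀ (r/2), (1:ℝ)/4 ∂μ ≤
          ∫ x in K ∩ Metric.ball x₀ (r/2), h x ^ 2 ∂μ := by
        apply setIntegral_mono_on (integrableOn_const (measure_lt_top _ _).ne)
          (hIh2.mono_set Set.inter_subset_left)
          (hKm.inter Metric.isOpen_ball.measurableSet)
        intro x hx
        have := hhin x hx.2
        nlinarith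
      have h2 : ∫ x in K ∩ Metric.ball x₀ (r/2), h x ^ 2 ∂μ ≤ a := by
        apply setIntegral_mono_set hIh2
        · exact Filter.Eventually.of_forall fun x => sq_nonneg _
        · exact HasSubset.Subset.eventuallyLE Set.inter_subset_left
      rw [setIntegral_const] at h1
      have hμt : 0 < (μ (K ∩ Metric.ball x₀ (r/2))).toReal :=
        ENNReal.toReal_pos hmb.ne' (measure_lt_top _ _).ne
      calc (0:ℝ) < (μ (K ∩ Metric.ball x₀ (r/2))).toReal • ((1:ℝ)/4) := by
            simp only [smul_eq_mul]; positivity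
        _ ≤ _ := le_trans h1 h2
    have hIneg : ∫ x in K, h x ^ 2 * f x ∂μ ≤ c / 2 * a := hIle
    have hca : c / 2 * a < 0 := mul_neg_of_neg_of_pos (by linarith) hapos
    -- bound on f
    obtain ⟨M₀, hM₀⟩ := hK.exists_bound_of_continuousOn hf.continuousOn
    set M := max M₀ 0 with hM
    have hMf : ∀ x ∈ K, |f x| ≤ M := fun x hx =>
      le_trans (hM₀ x hx) (le_max_left _ _)
    have hM0 : 0 ≤ M := le_max_right _ _
    set V := (μ K).toReal with hV
    have hV0 : 0 ≤ V := ENNReal.toReal_nonneg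
    set ε := -(c / 2 * a) with hε
    have hεpos : 0 < ε := by simp only [hε]; linarith
    set δ := min 1 (ε / (3 * (M + 1) * (V + 1))) with hδ
    have hδpos : 0 < δ := lt_min one_pos (by positivity)
    have hδ1 : δ ≤ 1 := min_le_left _ _
    have hδ2 : δ ≤ ε / (3 * (M + 1) * (V + 1)) := min_le_right _ _
    -- Stone–Weierstrass
    haveI : CompactSpace K := isCompact_iff_compactSpace.1 hK
    set coord : Fin n → C(K, ℝ) := fun i =>
      ⟨fun x => (x : EuclideanSpace ℝ (Fin n)) i, (EuclideanSpace.proj i).continuous.comp continuous_subtype_val⟩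
      with hcoord
    set A : Subalgebra ℝ C(K, ℝ) := (MvPolynomial.aeval coord).range with hA
    have hkey : ∀ p : MvPolynomial (Fin n) ℝ, ∀ x : K,
        (MvPolynomial.aeval coord p : C(K, ℝ)) x
          = MvPolynomial.eval (fun i => (x : EuclideanSpace ℝ (Fin n)) i) p := by
      intro p x
      induction p using MvPolynomial.induction_on with
      | C a => simp [MvPolynomial.algebraMap_eq]
      | add p q hp hq => simp [hp, hq]
      | mul_X p i hp => simp only [map_mul, MvPolynomial.aeval_X, MvPolynomial.eval_X, ContinuousMap.mul_apply, hp]; rfl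
    have hsep : A.SeparatesPoints := by
      intro x y hxy
      have : ∃ i, (x : EuclideanSpace ℝ (Fin n)) i ≠ (y : EuclideanSpace ℝ (Fin n)) i := by
        by_contra hcon
        push_neg at hcon
        exact hxy (Subtype.ext (PiLp.ext hcon))
      obtain ⟨i, hi⟩ := this
      have hmem : coord i ∈ A := (AlgHom.mem_range _).2 ⟨MvPolynomial.X i, MvPolynomial.aeval_X coord i⟩
      exact ⟨⇑(coord i), ⟨coord i, hmem, rfl⟩, hi⟩
    obtain ⟨g, hg⟩ := ContinuousMap.exists_mem_subalgebra_near_continuous_of_separatesPoints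
      A hsep (fun x : K => h x) (hhc.comp continuous_subtype_val) δ hδpos
    obtain ⟨p, hp⟩ := (AlgHom.mem_range _).1 g.2
    have hgp : ∀ x : K, |MvPolynomial.eval (fun i => (x : EuclideanSpace ℝ (Fin n)) i) p - h x| < δ := by
      intro x
      have h1 := hg x
      rw [← hp] at h1
      rw [hkey p x] at h1
      simpa [Real.norm_eq_abs] using h1
    -- pointwise bound for the polynomial
    set P : EuclideanSpace ℝ (Fin n) → ℝ := fun x => MvPolynomial.eval (fun i => x i) p with hP
    have hPc : Continuous P := by
      have h1 : Continuous fun v : Fin n → ℝ => MvPolynomial.eval v p :=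
        MvPolynomial.continuous_eval p
      exact h1.comp (continuous_pi fun i => (EuclideanSpace.proj i).continuous)
    have hptP : ∀ x ∈ K, P x ^ 2 * f x ≤ h x ^ 2 * f x + 3 * δ * M := by
      intro x hx
      have h1 : |P x - h x| < δ := hgp ⟨x, hx⟩
      have h2 : |f x| ≤ M := hMf x hx
      have h3 : |h x| ≤ 1 := abs_le.2 ⟨by linarith [hh0 x], hh1 x⟩
      have h4 : |P x ^ 2 - h x ^ 2| ≤ 3 * δ := by
        have : P x ^ 2 - h x ^ 2 = (P x - h x) * (P x + h x) := by ring
        rw [this, abs_mul]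
        have h5 : |P x + h x| ≤ |P x - h x| + 2 * |h x| := by
          have := abs_add_le (P x - h x) (2 * h x)
          calc |P x + h x| = |(P x - h x) + 2 * h x| := by ring_nf
            _ ≤ |P x - h x| + |2 * h x| := abs_add_le _ _
            _ = |P x - h x| + 2 * |h x| := by rw [abs_mul]; norm_num
        have h6 : |P x + h x| ≤ 3 := by
          have := h1.le
          linarith
        calc |P x - h x| * |P x + h x| ≤ δ * 3 := by
              apply mul_le_mul h1.le h6 (abs_nonneg _) hδpos.le
          _ = 3 * δ := by ring
      have h7 : P x ^ 2 * f x - h x ^ 2 * f x ≤ 3 * δ * M := by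
        calc P x ^ 2 * f x - h x ^ 2 * f x = (P x ^ 2 - h x ^ 2) * f x := by ring
          _ ≤ |(P x ^ 2 - h x ^ 2) * f x| := le_abs_self _
          _ = |P x ^ 2 - h x ^ 2| * |f x| := abs_mul _ _
          _ ≤ 3 * δ * M := by
              apply mul_le_mul h4 h2 (abs_nonneg _) (by positivity)
      linarith
    -- integrate
    have hIP : IntegrableOn (fun x => P x ^ 2 * f x) K μ :=
      hint_aux _ ((hPc.pow 2).mul hf)
    have hIrhs : IntegrableOn (fun x => h x ^ 2 * f x + 3 * δ * M) K μ :=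
      hIh2f.add (integrableOn_const (measure_lt_top _ _).ne)
    have hmain : ∫ x in K, P x ^ 2 * f x ∂μ ≤
        (∫ x in K, h x ^ 2 * f x ∂μ) + 3 * δ * M * V := by
      calc ∫ x in K, P x ^ 2 * f x ∂μ
          ≤ ∫ x in K, (h x ^ 2 * f x + 3 * δ * M) ∂μ :=
            setIntegral_mono_on hIP hIrhs hKm hptP
        _ = (∫ x in K, h x ^ 2 * f x ∂μ) + 3 * δ * M * V := by
            rw [integral_add hIh2f (integrableOn_const (measure_lt_top _ _).ne)]
            rw [setIntegral_const]
            simp [hV, smul_eq_mul, Measure.real]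
            ring
    have hsmall : 3 * δ * M * V < ε := by
      have hD : (0:ℝ) < 3 * (M + 1) * (V + 1) := by positivity
      have hδD : δ * (3 * (M + 1) * (V + 1)) ≤ ε := (le_div_iff₀ hD).1 hδ2
      nlinarith [hδpos, hM0, hV0]
    have hcontr : ∫ x in K, P x ^ 2 * f x ∂μ < 0 := by
      have h9 : (∫ x in K, h x ^ 2 * f x ∂μ) + 3 * δ * M * V < c / 2 * a + ε :=
        add_lt_add_of_le_of_lt hIneg hsmall
      have h10 : c / 2 * a + ε = 0 := by rw [hε]; ring
      linarith
    exact absurd (hint p) (not_le.2 hcontr)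
end

section
/- If a set K ⊆ ℝⁿ satisfies an interior cone condition with angle θ ∈ (0, π/2) and radius ρ > 0, then for every a ∈ K and every ε with 0 < ε ≤ ρ, vol(B_ε(a) ∩ K) ≥ (sin θ/(1+sin θ))ⁿ · vol(B_ε(a)). -/
open MeasureTheory Metric RealInnerProductSpace

set_option maxHeartbeats 1000000 in
theorem interior_cone_condition_volume_bound (n : ℕ)
    (K : Set (EuclideanSpace ℝ (Fin n)))
    (θ ρ : ℝ) (hθ : θ ∈ Set.Ioo 0 (Real.pi / 2)) (hρ : 0 < ρ)
    (hcone : ∀ x ∈ K, ∃ ξ : EuclideanSpace ℝ (Fin n), ‖ξ‖ = 1 ∧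
      {p : EuclideanSpace ℝ (Fin n) |
        ∃ y : EuclideanSpace ℝ (Fin n), ∃ lam : ℝ,
          ‖y‖ = 1 ∧ Real.cos θ ≤ ⟪y, ξ⟫ ∧ lam ∈ Set.Icc 0 ρ ∧ p = x + lam • y} ⊆ K) :
    ∀ a ∈ K, ∀ ε : ℝ, 0 < ε → ε ≤ ρ →
      (Real.sin θ / (1 + Real.sin θ)) ^ n * (volume (closedBall a ε)).toReal
        ≤ (volume (closedBall a ε ∩ K)).toReal := by
  intro a ha ε hε hερ
  obtain ⟨ξ, hξ, hsub⟩ := hcone a ha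
  have hπ := Real.pi_pos
  have hs0 : 0 < Real.sin θ := Real.sin_pos_of_pos_of_lt_pi hθ.1 (by linarith [hθ.2])
  have hcos : 0 < Real.cos θ :=
    Real.cos_pos_of_mem_Ioo ⟨by linarith [hθ.1], hθ.2⟩
  have hs1 : Real.sin θ < 1 := by
    nlinarith [Real.sin_sq_add_cos_sq θ]
  set h : ℝ := ε / (1 + Real.sin θ) with hh
  have hhpos : 0 < h := div_pos hε (by linarith)
  set s : ℝ := h * Real.sin θ with hs
  have hspos : 0 < s := mul_pos hhpos hs0
  have hsh : s + h = ε := by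
    have hne : 1 + Real.sin θ ≠ 0 := by linarith
    rw [hs, hh, div_mul_eq_mul_div, ← add_div, div_eq_iff hne]; ring
  set c : EuclideanSpace ℝ (Fin n) := a + h • ξ with hc
  -- containment
  have hball : closedBall c s ⊆ closedBall a ε ∩ K := by
    intro p hp
    rw [mem_closedBall, dist_eq_norm] at hp
    set v : EuclideanSpace ℝ (Fin n) := p - a with hv
    have hvc : p - c = v - h • ξ := by
      simp [hc, hv]; abel
    have hvc' : ‖v - h • ξ‖ ≤ s := by rw [← hvc]; exact hp
    have hnormhx : ‖h • ξ‖ = h := by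
      rw [norm_smul, hξ, Real.norm_eq_abs, abs_of_pos hhpos, mul_one]
    have hvub : ‖v‖ ≤ ε := by
      calc ‖v‖ = ‖(v - h • ξ) + h • ξ‖ := by rw [sub_add_cancel]
        _ ≤ ‖v - h • ξ‖ + ‖h • ξ‖ := norm_add_le _ _
        _ ≤ s + h := by rw [hnormhx]; linarith
        _ = ε := hsh
    have hvlb : h * (1 - Real.sin θ) ≤ ‖v‖ := by
      have := norm_sub_norm_le (h • ξ) (h • ξ - v)
      have h2 : h • ξ - (h • ξ - v) = v := by abel
      have h3 : ‖h • ξ - v‖ ≤ s := by rw [← norm_neg]; simpa using hvc'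
      rw [h2, hnormhx] at this
      nlinarith
    have hvpos : 0 < ‖v‖ := by nlinarith
    -- inner product bound
    have hinner : ‖v‖ * Real.cos θ ≤ ⟪v, ξ⟫ := by
      have hexp : ‖v - h • ξ‖ ^ 2 = ‖v‖ ^ 2 - 2 * ⟪v, h • ξ⟫ + ‖h • ξ‖ ^ 2 :=
        norm_sub_sq_real v (h • ξ)
      have hsq : ‖v - h • ξ‖ ^ 2 ≤ s ^ 2 := by
        have := norm_nonneg (v - h • ξ)
        nlinarith
      rw [hnormhx, real_inner_smul_right] at hexp
      have hpyth := Real.sin_sq_add_cos_sq θ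
      nlinarith [sq_nonneg (‖v‖ - h * Real.cos θ)]
    constructor
    · rw [mem_closedBall, dist_eq_norm]; exact hvub.trans_eq' rfl
    · apply hsub
      refine ⟨‖v‖⁻¹ • v, ‖v‖, ?_, ?_, ⟨norm_nonneg _, hvub.trans hερ⟩, ?_⟩
      · rw [norm_smul, Real.norm_eq_abs, abs_of_pos (inv_pos.2 hvpos),
          inv_mul_cancel₀ hvpos.ne']
      · rw [real_inner_smul_left, ← sub_nonneg]
        have heq : ‖v‖⁻¹ * ⟪v, ξ⟫ - Real.cos θ = ‖v‖⁻¹ * (⟪v, ξ⟫ - ‖v‖ * Real.cos θ) := by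
          field_simp
        rw [heq]
        have h1 : (0:ℝ) ≤ ‖v‖⁻¹ := (inv_pos.2 hvpos).le
        have h2 : (0:ℝ) ≤ ⟪v, ξ⟫ - ‖v‖ * Real.cos θ := by linarith
        exact mul_nonneg h1 h2
      · rw [smul_inv_smul₀ hvpos.ne']
        simp [hv]
  -- volume computation
  have hfin : volume (closedBall a ε) < ⊤ := measure_closedBall_lt_top
  have hmono : volume (closedBall c s) ≤ volume (closedBall a ε ∩ K) :=
    measure_mono hball
  have hrank : Module.finrank ℝ (EuclideanSpace ℝ (Fin n)) = n :=
    finrank_euclideanSpace_fin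
  have hvol1 : volume (closedBall c s)
      = ENNReal.ofReal (s ^ n) * volume (ball (0 : EuclideanSpace ℝ (Fin n)) 1) := by
    rw [Measure.addHaar_closedBall volume c hspos.le, hrank]
  have hvol2 : volume (closedBall a ε)
      = ENNReal.ofReal (ε ^ n) * volume (ball (0 : EuclideanSpace ℝ (Fin n)) 1) := by
    rw [Measure.addHaar_closedBall volume a hε.le, hrank]
  have hufin : volume (ball (0 : EuclideanSpace ℝ (Fin n)) 1) < ⊤ :=
    measure_ball_lt_top
  have hLHS : (Real.sin θ / (1 + Real.sin θ)) ^ n * (volume (closedBall a ε)).toReal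
      = (volume (closedBall c s)).toReal := by
    rw [hvol1, hvol2, ENNReal.toReal_mul, ENNReal.toReal_mul,
      ENNReal.toReal_ofReal (by positivity), ENNReal.toReal_ofReal (by positivity)]
    have : s = (Real.sin θ / (1 + Real.sin θ)) * ε := by
      rw [hs, hh]; ring
    rw [this, mul_pow]; ring
  rw [hLHS]
  exact ENNReal.toReal_mono (((measure_mono Set.inter_subset_left).trans_lt hfin).ne) hmono
end

section
/- Let K ⊆ ℝⁿ be compact with squared diameter D(K), a ∈ K, σ > 0, and 0 < ε. With G_a(x) = (2πσ²)^{−n/2} exp(−‖x−a‖²/(2σ²)) and C the constant with ∫_K C·G_a dx = 1, if vol(K ∩ B_ε(a)) ≥ η εⁿ γₙ then ∫_K C‖x−a‖ G_a(x) dx ≤ ε + (n σ^{n+1} p(n) / (εⁿ η)) · e^{ε²/(2σ²)}, where p(n) = ∫_0^∞ tⁿ e^{−t²/2} dt. -/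
open MeasureTheory Metric Set

lemma integrable_exp_norm_sq (n : ℕ) {b : ℝ} (hb : 0 < b) :
    Integrable (fun x : EuclideanSpace ℝ (Fin n) => Real.exp (-(b * ‖x‖ ^ 2))) := by
  have h := (GaussianFourier.integrable_cexp_neg_mul_sq_norm_add
    (V := EuclideanSpace ℝ (Fin n)) (b := (b : ℂ)) (by simpa using hb) 0 0).norm
  simpa [Complex.norm_exp, Complex.ext_iff, ← Complex.ofReal_pow] using h

lemma key_pt_bound {b t : ℝ} (hb : 0 < b) (ht : 0 ≤ t) :
    t * Real.exp (-(b * t ^ 2)) ≤ Real.sqrt (2 / b) * Real.exp (-(b / 2 * t ^ 2)) := by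
  set M := Real.sqrt (2 / b) with hM
  have hM0 : 0 ≤ M := Real.sqrt_nonneg _
  have hM2 : M ^ 2 = 2 / b := Real.sq_sqrt (by positivity)
  have hM2' : b * M ^ 2 = 2 := by rw [hM2]; field_simp
  set Ev := Real.exp (b / 2 * t ^ 2) with hEv
  have hEvpos : 0 < Ev := Real.exp_pos _
  have hE : b / 2 * t ^ 2 + 1 ≤ Ev := Real.add_one_le_exp _
  have hEv1 : 1 ≤ Ev := by nlinarith [sq_nonneg t]
  have h1 : Real.exp (-(b * t ^ 2)) = (Ev * Ev)⁻¹ := by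
    rw [Real.exp_neg, show b * t ^ 2 = b / 2 * t ^ 2 + b / 2 * t ^ 2 by ring, Real.exp_add]
  have h2 : Real.exp (-(b / 2 * t ^ 2)) = Ev⁻¹ := Real.exp_neg _
  rw [h1, h2]
  have h3 : t ^ 2 ≤ (M * Ev) ^ 2 := by nlinarith [sq_nonneg (Ev - 1)]
  have hkey : t ≤ M * Ev :=
    calc t = Real.sqrt (t ^ 2) := (Real.sqrt_sq ht).symm
    _ ≤ Real.sqrt ((M * Ev) ^ 2) := Real.sqrt_le_sqrt h3
    _ = M * Ev := Real.sqrt_sq (by positivity)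
  calc t * (Ev * Ev)⁻¹ ≤ (M * Ev) * (Ev * Ev)⁻¹ := by gcongr
  _ = M * Ev⁻¹ := by field_simp

lemma integrable_norm_mul_exp (n : ℕ) {s : ℝ} (hs : 0 < s) :
    Integrable (fun x : EuclideanSpace ℝ (Fin n) => ‖x‖ * Real.exp (-‖x‖ ^ 2 / s)) := by
  have hb : 0 < s⁻¹ := inv_pos.mpr hs
  have hdom := (integrable_exp_norm_sq n (half_pos hb)).const_mul (Real.sqrt (2 / s⁻¹))
  refine hdom.mono' ?_ ?_
  · exact (continuous_norm.mul (Real.continuous_exp.comp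
      ((continuous_norm.pow 2).neg.div_const s))).aestronglyMeasurable
  · filter_upwards with x
    have h := key_pt_bound hb (norm_nonneg x)
    rw [Real.norm_of_nonneg (by positivity)]
    calc ‖x‖ * Real.exp (-‖x‖ ^ 2 / s) = ‖x‖ * Real.exp (-(s⁻¹ * ‖x‖ ^ 2)) := by
          rw [neg_div, div_eq_inv_mul]
    _ ≤ Real.sqrt (2 / s⁻¹) * Real.exp (-(s⁻¹ / 2 * ‖x‖ ^ 2)) := h
    _ = Real.sqrt (2 / s⁻¹) * Real.exp (-(s⁻¹ / 2 * ‖x‖ ^ 2)) := rfl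

theorem gaussian_distance_moment_bound (n : ℕ)
    (K : Set (EuclideanSpace ℝ (Fin n))) (hK : IsCompact K)
    (a : EuclideanSpace ℝ (Fin n)) (haK : a ∈ K)
    (σ ε η : ℝ) (hσ : 0 < σ) (hε : 0 < ε) (hη : 0 < η)
    (hvol : η * ε ^ n * (volume (closedBall (0 : EuclideanSpace ℝ (Fin n)) 1)).toReal
      ≤ (volume (K ∩ closedBall a ε)).toReal) :
    ∫ x in K,
        (∫ y in K, (2 * Real.pi * σ ^ 2) ^ (-(n : ℝ) / 2)
            * Real.exp (-‖y - a‖ ^ 2 / (2 * σ ^ 2)))⁻¹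
          * ‖x - a‖ * ((2 * Real.pi * σ ^ 2) ^ (-(n : ℝ) / 2)
            * Real.exp (-‖x - a‖ ^ 2 / (2 * σ ^ 2)))
      ≤ ε + ((n : ℝ) * σ ^ (n + 1)
            * (∫ t in Set.Ioi (0 : ℝ), t ^ n * Real.exp (-t ^ 2 / 2)) / (ε ^ n * η))
          * Real.exp (ε ^ 2 / (2 * σ ^ 2)) := by
  rcases Nat.eq_zero_or_pos n with h0 | hn
  · subst h0
    have hxa : ∀ x : EuclideanSpace ℝ (Fin 0), x - a = 0 := fun x => by
      ext i; exact Fin.elim0 i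
    have hp0 : 0 ≤ ∫ t in Set.Ioi (0 : ℝ), t ^ 0 * Real.exp (-t ^ 2 / 2) :=
      setIntegral_nonneg measurableSet_Ioi (fun t _ => by positivity)
    simp only [hxa, norm_zero, mul_zero, zero_mul, integral_zero, Nat.cast_zero, pow_zero, one_mul]
    positivity

  -- main case : 1 ≤ n
  haveI : Nontrivial (EuclideanSpace ℝ (Fin n)) :=
    Module.nontrivial_of_finrank_pos (R := ℝ)
      (by rw [finrank_euclideanSpace_fin]; omega)
  set c : ℝ := (2 * Real.pi * σ ^ 2) ^ (-(n : ℝ) / 2) with hc_def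
  have hc : 0 < c := Real.rpow_pos_of_pos (by positivity) _
  set g : EuclideanSpace ℝ (Fin n) → ℝ :=
    fun x => c * Real.exp (-‖x - a‖ ^ 2 / (2 * σ ^ 2)) with hg_def
  set Z : ℝ := ∫ y in K, g y with hZ_def
  set p : ℝ := ∫ t in Set.Ioi (0 : ℝ), t ^ n * Real.exp (-t ^ 2 / 2) with hp_def
  have hp0 : 0 ≤ p :=
    setIntegral_nonneg measurableSet_Ioi
      (fun t ht => mul_nonneg (pow_nonneg (le_of_lt ht) n) (Real.exp_nonneg _))
  have hg_cont : Continuous g := by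
    apply continuous_const.mul
    exact Real.continuous_exp.comp
      (((continuous_id.sub continuous_const).norm.pow 2).neg.div_const _)
  have hg0 : ∀ x, 0 ≤ g x := fun x => mul_nonneg hc.le (Real.exp_nonneg _)
  have hmeasK : MeasurableSet K := hK.measurableSet
  have hB : MeasurableSet (closedBall a ε) := measurableSet_closedBall
  have hKB : MeasurableSet (K ∩ closedBall a ε) := hmeasK.inter hB
  have hgK : IntegrableOn g K := hg_cont.continuousOn.integrableOn_compact hK
  have hfK : IntegrableOn (fun x => ‖x - a‖ * g x) K :=
    (((continuous_id.sub continuous_const).norm.mul hg_cont)).continuousOn.integrableOn_compact hK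
  set γ : ℝ := (volume (closedBall (0 : EuclideanSpace ℝ (Fin n)) 1)).toReal with hγ_def
  have hγpos : 0 < γ :=
    ENNReal.toReal_pos (measure_closedBall_pos volume _ one_pos).ne' measure_closedBall_lt_top.ne
  set m : ℝ := c * Real.exp (-ε ^ 2 / (2 * σ ^ 2)) with hm_def
  have hm : 0 < m := by positivity
  -- lower bound for Z
  have hgm : ∀ x ∈ K ∩ closedBall a ε, m ≤ g x := by
    intro x hx
    have hxε : ‖x - a‖ ≤ ε := mem_closedBall_iff_norm.mp hx.2
    have h2 : -ε ^ 2 / (2 * σ ^ 2) ≤ -‖x - a‖ ^ 2 / (2 * σ ^ 2) := by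
      apply div_le_div_of_nonneg_right ?_ ?_ |>.trans_eq rfl
      · exact neg_le_neg (pow_le_pow_left₀ (norm_nonneg _) hxε 2)
      · positivity
    exact mul_le_mul_of_nonneg_left (Real.exp_le_exp.mpr h2) hc.le
  have hKBfin : volume (K ∩ closedBall a ε) ≠ ⊤ :=
    ((measure_mono Set.inter_subset_left).trans_lt hK.measure_lt_top).ne
  have hZ1 : m * (volume (K ∩ closedBall a ε)).toReal ≤ ∫ x in K ∩ closedBall a ε, g x :=
    by
      have h := setIntegral_ge_of_const_le hKB hKBfin hgm (hgK.mono_set Set.inter_subset_left)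
      simp only [smul_eq_mul, Measure.real] at h
      linarith
  have hZ2 : ∫ x in K ∩ closedBall a ε, g x ≤ Z :=
    setIntegral_mono_set hgK (Filter.Eventually.of_forall hg0)
      (HasSubset.Subset.eventuallyLE Set.inter_subset_left)
  have hZlb : m * (η * ε ^ n * γ) ≤ Z :=
    le_trans (le_trans (mul_le_mul_of_nonneg_left hvol hm.le) hZ1) hZ2
  have hZ0pos : 0 < m * (η * ε ^ n * γ) := by positivity
  have hZpos : 0 < Z := lt_of_lt_of_le hZ0pos hZlb
  -- full space integral
  have hI : Integrable (fun x : EuclideanSpace ℝ (Fin n) =>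
      ‖x‖ * (c * Real.exp (-‖x‖ ^ 2 / (2 * σ ^ 2)))) := by
    have := (integrable_norm_mul_exp n (s := 2 * σ ^ 2) (by positivity)).const_mul c
    refine this.congr ?_ <;> try exact Filter.Eventually.of_forall fun x => by ring
  have hI' : Integrable (fun x : EuclideanSpace ℝ (Fin n) => ‖x - a‖ * g x) := by
    have := hI.comp_sub_right a
    exact this
  -- polar coordinates
  have hfr : Module.finrank ℝ (EuclideanSpace ℝ (Fin n)) = n := finrank_euclideanSpace_fin
  have hpolar : ∫ x : EuclideanSpace ℝ (Fin n), ‖x‖ * (c * Real.exp (-‖x‖ ^ 2 / (2 * σ ^ 2)))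
      = n * (γ * ∫ y in Set.Ioi (0:ℝ), y ^ (n-1) * (y * (c * Real.exp (-y ^ 2 / (2 * σ ^ 2))))) := by
    have h := integral_fun_norm_addHaar (E := EuclideanSpace ℝ (Fin n)) (μ := volume)
      (fun r : ℝ => r * (c * Real.exp (-r ^ 2 / (2 * σ ^ 2))))
    rw [hfr] at h
    rw [h, nsmul_eq_mul]
    simp only [smul_eq_mul]
    congr 1
    rw [hγ_def, Measure.addHaar_closedBall_eq_addHaar_ball]
    rfl
  have hinner : ∫ y in Set.Ioi (0:ℝ), y ^ (n-1) * (y * (c * Real.exp (-y ^ 2 / (2 * σ ^ 2))))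
      = c * ∫ y in Set.Ioi (0:ℝ), y ^ n * Real.exp (-y ^ 2 / (2 * σ ^ 2)) := by
    rw [← integral_const_mul]
    refine setIntegral_congr_fun measurableSet_Ioi fun y _ => ?_
    rw [show y ^ n = y ^ (n - 1) * y from by rw [← pow_succ, Nat.sub_add_cancel hn]]
    ring
  -- substitution y = σ t
  have hsub : ∫ y in Set.Ioi (0:ℝ), y ^ n * Real.exp (-y ^ 2 / (2 * σ ^ 2))
      = σ ^ (n + 1) * p := by
    have h := integral_comp_mul_left_Ioi
      (fun y => y ^ n * Real.exp (-y ^ 2 / (2 * σ ^ 2))) 0 hσ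
    rw [mul_zero] at h
    have hL : ∫ x in Set.Ioi (0:ℝ),
        (σ * x) ^ n * Real.exp (-(σ * x) ^ 2 / (2 * σ ^ 2)) = σ ^ n * p := by
      rw [hp_def, ← integral_const_mul]
      refine setIntegral_congr_fun measurableSet_Ioi fun x _ => ?_
      rw [show -(σ * x) ^ 2 / (2 * σ ^ 2) = -x ^ 2 / 2 by field_simp, mul_pow]
      ring
    rw [hL, smul_eq_mul] at h
    have h2 : σ * (σ ^ n * p) = ∫ y in Set.Ioi (0:ℝ), y ^ n * Real.exp (-y ^ 2 / (2 * σ ^ 2)) := by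
      rw [h]; field_simp
    rw [← h2, pow_succ]
    ring
  -- splitting the integral over K
  have hsplit : (∫ x in K ∩ closedBall a ε, ‖x - a‖ * g x)
      + ∫ x in K \ closedBall a ε, ‖x - a‖ * g x = ∫ x in K, ‖x - a‖ * g x :=
    integral_inter_add_diff hB hfK
  have hbound1 : ∫ x in K ∩ closedBall a ε, ‖x - a‖ * g x ≤ ε * Z := by
    have h1 : ∫ x in K ∩ closedBall a ε, ‖x - a‖ * g x
        ≤ ∫ x in K ∩ closedBall a ε, ε * g x := by
      have hεg : IntegrableOn (fun x => ε * g x) K := hgK.const_mul ε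
      refine setIntegral_mono_on (hfK.mono_set Set.inter_subset_left)
        (hεg.mono_set Set.inter_subset_left) hKB fun x hx => ?_
      exact mul_le_mul_of_nonneg_right (mem_closedBall_iff_norm.mp hx.2) (hg0 x)
    rw [integral_const_mul] at h1
    exact h1.trans (mul_le_mul_of_nonneg_left hZ2 hε.le)
  have hbound2 : ∫ x in K \ closedBall a ε, ‖x - a‖ * g x
      ≤ ∫ x : EuclideanSpace ℝ (Fin n), ‖x - a‖ * g x :=
    setIntegral_le_integral hI' (Filter.Eventually.of_forall fun x => by positivity)
  have htrans : ∫ x : EuclideanSpace ℝ (Fin n), ‖x - a‖ * g x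
      = ∫ x : EuclideanSpace ℝ (Fin n), ‖x‖ * (c * Real.exp (-‖x‖ ^ 2 / (2 * σ ^ 2))) :=
    integral_sub_right_eq_self
      (fun x : EuclideanSpace ℝ (Fin n) => ‖x‖ * (c * Real.exp (-‖x‖ ^ 2 / (2 * σ ^ 2)))) a
  set I : ℝ := ∫ x : EuclideanSpace ℝ (Fin n), ‖x‖ * (c * Real.exp (-‖x‖ ^ 2 / (2 * σ ^ 2)))
    with hI_def
  have hIval : I = n * (γ * (c * (σ ^ (n + 1) * p))) := by
    rw [hpolar, hinner, hsub]
  have hInonneg : 0 ≤ I := by rw [hIval]; positivity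
  have hKbound : ∫ x in K, ‖x - a‖ * g x ≤ ε * Z + I := by
    rw [← hsplit]
    exact add_le_add hbound1 (hbound2.trans_eq htrans)
  -- final computation
  have hLHS : ∫ x in K, Z⁻¹ * ‖x - a‖ * g x = Z⁻¹ * ∫ x in K, ‖x - a‖ * g x := by
    simp_rw [mul_assoc]
    exact integral_const_mul _ _
  calc ∫ x in K, Z⁻¹ * ‖x - a‖ * g x
      = Z⁻¹ * ∫ x in K, ‖x - a‖ * g x := hLHS
    _ ≤ Z⁻¹ * (ε * Z + I) := by
        exact mul_le_mul_of_nonneg_left hKbound (inv_nonneg.mpr hZpos.le)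
    _ = ε + I / Z := by field_simp [hZpos.ne']; try ring
    _ ≤ ε + I / (m * (η * ε ^ n * γ)) :=
        add_le_add_right (div_le_div_of_nonneg_left hInonneg hZ0pos hZlb) ε
    _ = ε + ((n : ℝ) * σ ^ (n + 1) * p / (ε ^ n * η)) * Real.exp (ε ^ 2 / (2 * σ ^ 2)) := by
        congr 1
        rw [hIval, hm_def, neg_div, Real.exp_neg]
        field_simp
end
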